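/- Let D, m ≥ 1, let h* : ℝ^D → {−1,+1} be measurable, and let 𝒟 be the distribution of (x, h*(x)) where x is a standard Gaussian N(0, I_D) on ℝ^D. Consider the algorithm that, on a training set S with input points x^(1),…,x^(m), outputs the classifier h_S defined by h_S(x) = −h*(x) if x ∈ {−x^(1),…,−x^(m)} and h_S(x) = h*(x) otherwise. Then with respect to the 0-1 loss: (i) with probability 1 over S ~ 𝒟^m, L̂_S(h_S) = 0 and L_𝒟(h_S) = 0, so the generalization error satisfies ε_gen(m,δ) = 0 for every δ ∈ (0,1); and (ii) for every δ ∈ (0, 1/2), the tightest algorithm-dependent uniform convergence bound satisfies ε_unif-alg(m,δ) = 1. -/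

import Mathlib

open MeasureTheory ProbabilityTheory
open scoped ENNReal NNReal

noncomputable section

namespace AbstractSetup

attribute [local instance] Classical.propDecidable

/-- The 0-1 loss `1[h(x) ≠ y]` for classifiers with values in `{-1,+1} ⊆ ℝ`. -/
def loss01 (a y : ℝ) : ℝ := if a = y then 0 else 1

/-- The data distribution: `(x, h*(x))` with `x` standard Gaussian on `ℝ^D`. -/
def μD (D : ℕ) (hstar : (Fin D → ℝ) → ℝ) : Measure ((Fin D → ℝ) × ℝ) :=
  (Measure.pi fun _ : Fin D => gaussianReal 0 1).map (fun x => (x, hstar x))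

/-- Distribution of an i.i.d. `m`-sample. -/
def μS (D m : ℕ) (hstar : (Fin D → ℝ) → ℝ) : Measure (Fin m → (Fin D → ℝ) × ℝ) :=
  Measure.pi fun _ => μD D hstar

/-- The learner: it agrees with `h*` everywhere except on the negations
`{-x⁽¹⁾, …, -x⁽ᵐ⁾}` of the training inputs, where it flips the sign of `h*`. -/
def alg (D m : ℕ) (hstar : (Fin D → ℝ) → ℝ)
    (S : Fin m → (Fin D → ℝ) × ℝ) : (Fin D → ℝ) → ℝ :=
  fun x => if ∃ i : Fin m, x = -(S i).1 then -hstar x else hstar x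

/-- Expected 0-1 loss `L_𝒟(h)`. -/
def Ld (D : ℕ) (hstar : (Fin D → ℝ) → ℝ) (h : (Fin D → ℝ) → ℝ) : ℝ :=
  ∫ z, loss01 (h z.1) z.2 ∂(μD D hstar)

/-- Empirical 0-1 loss `L̂_S(h)`. -/
def Le (D m : ℕ) (S : Fin m → (Fin D → ℝ) × ℝ) (h : (Fin D → ℝ) → ℝ) : ℝ :=
  (1 / (m : ℝ)) * ∑ i, loss01 (h (S i).1) (S i).2

/-- The generalization error `ε_gen(m,δ)` of the algorithm. -/
def genErr (D m : ℕ) (hstar : (Fin D → ℝ) → ℝ) (δ : ℝ) : ℝ :=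
  sInf {ε : ℝ | 0 ≤ ε ∧
    ENNReal.ofReal (1 - δ) ≤
      μS D m hstar
        {S | Ld D hstar (alg D m hstar S) - Le D m S (alg D m hstar S) ≤ ε}}

/-- The tightest algorithm-dependent uniform convergence bound `ε_unif-alg(m,δ)`. -/
def unifAlg (D m : ℕ) (hstar : (Fin D → ℝ) → ℝ) (δ : ℝ) : ℝ :=
  sInf {ε : ℝ | 0 ≤ ε ∧
    ∃ 𝒮 : Set (Fin m → (Fin D → ℝ) × ℝ), MeasurableSet 𝒮 ∧
      ENNReal.ofReal (1 - δ) ≤ μS D m hstar 𝒮 ∧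
      ∀ S ∈ 𝒮, ∀ S' ∈ 𝒮,
        |Ld D hstar (alg D m hstar S') - Le D m S (alg D m hstar S')| ≤ ε}


instance : NullSingletonClass (gaussianReal 0 1) :=
  ⟨fun a => gaussianReal_absolutelyContinuous 0 one_ne_zero (measure_singleton a)⟩

/-- Standard Gaussian product on `ℝ^D`. -/
def γpi (D : ℕ) : Measure (Fin D → ℝ) := Measure.pi fun _ : Fin D => gaussianReal 0 1

instance (D : ℕ) : IsProbabilityMeasure (γpi D) := by unfold γpi; infer_instance

lemma γpi_noAtoms {D : ℕ} (hD : 1 ≤ D) : NullSingletonClass (γpi D) := by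
  haveI : Nonempty (Fin D) := ⟨⟨0, hD⟩⟩
  unfold γpi; infer_instance

lemma gaussian_neg : MeasurePreserving (fun t : ℝ => -t) (gaussianReal 0 1) (gaussianReal 0 1) := by
  refine ⟨measurable_neg, ?_⟩
  have h : (fun t : ℝ => -t) = ((-1 : ℝ) * ·) := by funext t; ring
  rw [h, gaussianReal_map_const_mul]
  norm_num

lemma gaussianD_neg {D : ℕ} :
    MeasurePreserving (fun x : Fin D → ℝ => fun k => -(x k)) (γpi D) (γpi D) :=
  measurePreserving_pi _ _ fun _ => gaussian_neg

lemma pair_neg_null {D m : ℕ} (hD : 1 ≤ D) (i j : Fin m) :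
    (Measure.pi fun _ : Fin m => γpi D) {X | X i = -(X j)} = 0 := by
  haveI : NullSingletonClass (γpi D) := γpi_noAtoms hD
  by_cases hij : i = j
  · subst hij
    have h1 : {X : Fin m → Fin D → ℝ | X i = -(X i)} = Function.eval i ⁻¹' {x : Fin D → ℝ | x = -x} := rfl
    rw [h1]
    apply Measure.pi_eval_preimage_null
    have h0 : {x : Fin D → ℝ | x = -x} ⊆ {(0 : Fin D → ℝ)} := by
      intro x hx
      have hx2 : x = -x := hx
      have hx0 : x = 0 := by
        funext k
        have hk : x k = -(x k) := congrFun hx2 k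
        have : x k = 0 := by linarith
        simpa using this
      simpa using hx0
    exact measure_mono_null h0 (measure_singleton 0)
  · have e_meas : Measurable (fun X : Fin m → Fin D → ℝ => (X i, X j)) :=
      (measurable_pi_apply i).prodMk (measurable_pi_apply j)
    have hmap : (γpi D).prod (γpi D)
        = (Measure.pi fun _ : Fin m => γpi D).map (fun X => (X i, X j)) := by
      refine Measure.prod_eq fun s t hs ht => ?_
      rw [Measure.map_apply e_meas (hs.prod ht)]
      have hpre : (fun X : Fin m → Fin D → ℝ => (X i, X j)) ⁻¹' (s ×ˢ t)
          = Set.pi Set.univ (Function.update (Function.update (fun _ => Set.univ) i s) j t) := by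
        ext X
        simp only [Set.mem_preimage, Set.mem_prod, Set.mem_pi, Set.mem_univ, true_implies]
        constructor
        · rintro ⟨h1, h2⟩ k
          rcases eq_or_ne k j with rfl | hkj
          · rw [Function.update_self]; exact h2
          · rw [Function.update_of_ne hkj]
            rcases eq_or_ne k i with rfl | hki
            · rw [Function.update_self]; exact h1
            · rw [Function.update_of_ne hki]; trivial
        · intro h
          constructor
          · have := h i
            rwa [Function.update_of_ne hij, Function.update_self] at this
          · have := h j
            rwa [Function.update_self] at this
      rw [hpre, Measure.pi_pi]
      have hptwise : ∀ k : Fin m,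
          γpi D (Function.update (Function.update (fun _ => Set.univ) i s) j t k)
            = Function.update (Function.update (fun _ : Fin m => (1 : ℝ≥0∞)) i (γpi D s)) j
                (γpi D t) k := by
        intro k
        rcases eq_or_ne k j with rfl | hkj
        · rw [Function.update_self, Function.update_self]
        · rw [Function.update_of_ne hkj, Function.update_of_ne hkj]
          rcases eq_or_ne k i with rfl | hki
          · rw [Function.update_self, Function.update_self]
          · rw [Function.update_of_ne hki, Function.update_of_ne hki]
            exact measure_univ
      rw [Finset.prod_congr rfl fun k _ => hptwise k]
      rw [Finset.prod_update_of_mem (Finset.mem_univ j)]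
      rw [Finset.prod_update_of_mem
        (Finset.mem_sdiff.mpr ⟨Finset.mem_univ i, by simp [hij]⟩)]
      rw [Finset.prod_const_one, mul_one, mul_comm]
    have hset : MeasurableSet {p : (Fin D → ℝ) × (Fin D → ℝ) | p.1 = -p.2} :=
      measurableSet_eq_fun measurable_fst measurable_snd.neg
    have h2 : {X : Fin m → Fin D → ℝ | X i = -(X j)}
        = (fun X => (X i, X j)) ⁻¹' {p : (Fin D → ℝ) × (Fin D → ℝ) | p.1 = -p.2} := rfl
    rw [h2, ← Measure.map_apply e_meas hset, ← hmap]
    rw [Measure.prod_apply hset]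
    have hfib : ∀ x : Fin D → ℝ,
        (Prod.mk x ⁻¹' {p : (Fin D → ℝ) × (Fin D → ℝ) | p.1 = -p.2}) = {-x} := by
      intro x
      ext y
      simp only [Set.mem_preimage, Set.mem_setOf_eq, Set.mem_singleton_iff]
      constructor
      · intro hxy; rw [hxy, neg_neg]
      · intro hyx; rw [hyx, neg_neg]
    simp [hfib]

/-- The labeling map `x ↦ (x, h*(x))`. -/
def gmap {D : ℕ} (hstar : (Fin D → ℝ) → ℝ) : (Fin D → ℝ) → (Fin D → ℝ) × ℝ :=
  fun x => (x, hstar x)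

lemma measurable_gmap {D : ℕ} {hstar : (Fin D → ℝ) → ℝ} (hmeas : Measurable hstar) :
    Measurable (gmap hstar) :=
  measurable_id.prodMk hmeas

lemma μD_eq {D : ℕ} (hstar : (Fin D → ℝ) → ℝ) : μD D hstar = (γpi D).map (gmap hstar) := rfl

lemma isProb_μD {D : ℕ} {hstar : (Fin D → ℝ) → ℝ} (hmeas : Measurable hstar) :
    IsProbabilityMeasure (μD D hstar) := by
  rw [μD_eq]
  exact Measure.isProbabilityMeasure_map (measurable_gmap hmeas).aemeasurable

/-- The samplewise labeling map. -/
def Fmap {D : ℕ} (m : ℕ) (hstar : (Fin D → ℝ) → ℝ) :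
    (Fin m → Fin D → ℝ) → (Fin m → (Fin D → ℝ) × ℝ) :=
  fun X i => (X i, hstar (X i))

lemma measurePreserving_Fmap {D m : ℕ} {hstar : (Fin D → ℝ) → ℝ} (hmeas : Measurable hstar) :
    MeasurePreserving (Fmap m hstar) (Measure.pi fun _ : Fin m => γpi D) (μS D m hstar) := by
  haveI := isProb_μD (D := D) hmeas
  exact measurePreserving_pi _ _ fun _ : Fin m => ⟨measurable_gmap hmeas, (μD_eq hstar).symm⟩

lemma Ld_alg_eq_zero {D m : ℕ} {hstar : (Fin D → ℝ) → ℝ} (hD : 1 ≤ D)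
    (hmeas : Measurable hstar) (hrange : ∀ x, hstar x = 1 ∨ hstar x = -1)
    (S : Fin m → (Fin D → ℝ) × ℝ) :
    Ld D hstar (alg D m hstar S) = 0 := by
  haveI : NullSingletonClass (γpi D) := γpi_noAtoms hD
  have hCeq : {x : Fin D → ℝ | ∃ i : Fin m, x = -(S i).1} = ⋃ i, {-(S i).1} := by
    ext x; simp [Set.mem_iUnion, eq_comm]
  have hC : MeasurableSet {x : Fin D → ℝ | ∃ i : Fin m, x = -(S i).1} := by
    rw [hCeq]; exact MeasurableSet.iUnion fun i => measurableSet_singleton _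
  have halg : Measurable (alg D m hstar S) := Measurable.ite hC hmeas.neg hmeas
  have hf : Measurable (fun z : (Fin D → ℝ) × ℝ => loss01 (alg D m hstar S z.1) z.2) := by
    unfold loss01
    exact Measurable.ite (measurableSet_eq_fun (halg.comp measurable_fst) measurable_snd)
      measurable_const measurable_const
  rw [Ld, μD_eq, integral_map (measurable_gmap hmeas).aemeasurable hf.aestronglyMeasurable]
  have hind : (fun x => loss01 (alg D m hstar S (gmap hstar x).1) (gmap hstar x).2)
      = Set.indicator {x : Fin D → ℝ | ∃ i : Fin m, x = -(S i).1} (fun _ => (1 : ℝ)) := by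
    funext x
    by_cases hx : ∃ i : Fin m, x = -(S i).1
    · rw [Set.indicator_of_mem (show x ∈ {x : Fin D → ℝ | ∃ i : Fin m, x = -(S i).1} from hx)]
      show loss01 (alg D m hstar S x) (hstar x) = 1
      rw [alg, if_pos hx, loss01, if_neg ?_]
      rcases hrange x with h | h <;> rw [h] <;> norm_num
    · rw [Set.indicator_of_notMem (show x ∉ {x : Fin D → ℝ | ∃ i : Fin m, x = -(S i).1} from hx)]
      show loss01 (alg D m hstar S x) (hstar x) = 0
      rw [alg, if_neg hx, loss01, if_pos rfl]
  rw [hind, integral_indicator_const _ hC]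
  have hnull : (γpi D) {x : Fin D → ℝ | ∃ i : Fin m, x = -(S i).1} = 0 := by
    rw [hCeq]
    exact measure_iUnion_null fun i => measure_singleton _
  rw [measureReal_def, hnull]
  simp

/-- abstract setup of the paper: the learner that flips
`h*` exactly on the negated training inputs has, almost surely, zero empirical
and zero test 0-1 error (so `ε_gen(m,δ) = 0` for all `δ ∈ (0,1)`), while the
tightest algorithm-dependent uniform convergence bound equals `1` for every
`δ ∈ (0,1/2)`. -/
theorem abstract_failure_of_uniform_convergence
    (D m : ℕ) (hD : 1 ≤ D) (hm : 1 ≤ m)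
    (hstar : (Fin D → ℝ) → ℝ) (hmeas : Measurable hstar)
    (hrange : ∀ x, hstar x = 1 ∨ hstar x = -1) :
    (μS D m hstar
        {S | Le D m S (alg D m hstar S) = 0 ∧ Ld D hstar (alg D m hstar S) = 0}
      = 1) ∧
    (∀ δ : ℝ, 0 < δ → δ < 1 → genErr D m hstar δ = 0) ∧
    (∀ δ : ℝ, 0 < δ → δ < 1/2 → unifAlg D m hstar δ = 1) := by
  haveI hprobD : IsProbabilityMeasure (μD D hstar) := isProb_μD hmeas
  haveI hprobS : IsProbabilityMeasure (μS D m hstar) := by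
    unfold μS; infer_instance
  set ν : Measure (Fin m → Fin D → ℝ) := Measure.pi fun _ : Fin m => γpi D with hν
  haveI hprobν : IsProbabilityMeasure ν := by rw [hν]; infer_instance
  have hF : MeasurePreserving (Fmap m hstar) ν (μS D m hstar) := measurePreserving_Fmap hmeas
  have hmR : (0:ℝ) < (m:ℝ) := by exact_mod_cast hm
  -- the good event
  set B : Set (Fin m → (Fin D → ℝ) × ℝ) :=
    {S | (∀ i, (S i).2 = hstar (S i).1) ∧ ∀ i j, (S i).1 ≠ -((S j).1)} with hB
  have hBmeas : MeasurableSet B := by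
    rw [hB, Set.setOf_and]
    refine MeasurableSet.inter ?_ ?_
    · rw [Set.setOf_forall]
      exact MeasurableSet.iInter fun i =>
        measurableSet_eq_fun (measurable_snd.comp (measurable_pi_apply i))
          (hmeas.comp (measurable_fst.comp (measurable_pi_apply i)))
    · rw [Set.setOf_forall]
      refine MeasurableSet.iInter fun i => ?_
      rw [Set.setOf_forall]
      refine MeasurableSet.iInter fun j => ?_
      exact (measurableSet_eq_fun (measurable_fst.comp (measurable_pi_apply i))
        ((measurable_fst.comp (measurable_pi_apply j)).neg)).compl
  have hFpre : Fmap m hstar ⁻¹' B = {X : Fin m → Fin D → ℝ | ∀ i j, X i ≠ -(X j)} := by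
    ext X
    exact ⟨fun h => h.2, fun h => ⟨fun i => rfl, h⟩⟩
  have hUmeas : MeasurableSet (⋃ i, ⋃ j, {X : Fin m → Fin D → ℝ | X i = -(X j)}) :=
    MeasurableSet.iUnion fun i => MeasurableSet.iUnion fun j =>
      measurableSet_eq_fun (measurable_pi_apply i) (measurable_pi_apply j).neg
  have hU0 : ν (⋃ i, ⋃ j, {X : Fin m → Fin D → ℝ | X i = -(X j)}) = 0 :=
    measure_iUnion_null fun i => measure_iUnion_null fun j => pair_neg_null hD i j
  have hUeq : {X : Fin m → Fin D → ℝ | ∀ i j, X i ≠ -(X j)}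
      = (⋃ i, ⋃ j, {X : Fin m → Fin D → ℝ | X i = -(X j)})ᶜ := by
    ext X
    simp only [Set.mem_compl_iff, Set.mem_iUnion, Set.mem_setOf_eq, not_exists]
  have hμSB : μS D m hstar B = 1 := by
    rw [← hF.map_eq, Measure.map_apply hF.measurable hBmeas, hFpre, hUeq,
      measure_compl hUmeas (measure_ne_top _ _), hU0, measure_univ, tsub_zero]
  have hBsub : B ⊆
      {S | Le D m S (alg D m hstar S) = 0 ∧ Ld D hstar (alg D m hstar S) = 0} := by
    rintro S ⟨hlab, hne⟩
    refine ⟨?_, Ld_alg_eq_zero hD hmeas hrange S⟩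
    have hz : ∀ i : Fin m, loss01 (alg D m hstar S (S i).1) (S i).2 = 0 := by
      intro i
      have hno : ¬ ∃ j : Fin m, (S i).1 = -((S j).1) := by
        rintro ⟨j, hj⟩; exact hne i j hj
      have h1 : alg D m hstar S (S i).1 = hstar (S i).1 := if_neg hno
      rw [h1, hlab i, loss01, if_pos rfl]
    rw [Le, Finset.sum_eq_zero fun i _ => hz i, mul_zero]
  have part1 : μS D m hstar
      {S | Le D m S (alg D m hstar S) = 0 ∧ Ld D hstar (alg D m hstar S) = 0} = 1 := by
    refine le_antisymm prob_le_one ?_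
    calc (1 : ℝ≥0∞) = μS D m hstar B := hμSB.symm
    _ ≤ _ := measure_mono hBsub
  refine ⟨part1, ?_, ?_⟩
  · -- generalization error is zero
    intro δ hδ0 hδ1
    have h0mem : (0:ℝ) ∈ {ε : ℝ | 0 ≤ ε ∧
        ENNReal.ofReal (1 - δ) ≤
          μS D m hstar
            {S | Ld D hstar (alg D m hstar S) - Le D m S (alg D m hstar S) ≤ ε}} := by
      refine ⟨le_refl 0, ?_⟩
      have hsub : {S | Le D m S (alg D m hstar S) = 0 ∧ Ld D hstar (alg D m hstar S) = 0}
          ⊆ {S | Ld D hstar (alg D m hstar S) - Le D m S (alg D m hstar S) ≤ 0} := by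
        rintro S ⟨h1, h2⟩
        simp only [Set.mem_setOf_eq, h1, h2, sub_zero, le_refl]
      calc ENNReal.ofReal (1 - δ) ≤ 1 := ENNReal.ofReal_le_one.mpr (by linarith)
      _ = _ := part1.symm
      _ ≤ _ := measure_mono hsub
    rw [genErr]
    exact le_antisymm (csInf_le ⟨0, fun x hx => hx.1⟩ h0mem)
      (le_csInf ⟨0, h0mem⟩ fun x hx => hx.1)
  · -- uniform convergence bound is one
    intro δ hδ0 hδ12
    have hLe0 : ∀ (S : Fin m → (Fin D → ℝ) × ℝ) (h : (Fin D → ℝ) → ℝ),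
        0 ≤ Le D m S h := by
      intro S h
      refine mul_nonneg (by positivity) (Finset.sum_nonneg fun i _ => ?_)
      rw [loss01]; split_ifs <;> norm_num
    have hLe1 : ∀ (S : Fin m → (Fin D → ℝ) × ℝ) (h : (Fin D → ℝ) → ℝ),
        Le D m S h ≤ 1 := by
      intro S h
      rw [Le]
      have hsum : ∑ i, loss01 (h (S i).1) (S i).2 ≤ (m : ℝ) := by
        calc ∑ i, loss01 (h (S i).1) (S i).2 ≤ ∑ _i : Fin m, (1:ℝ) := by
              refine Finset.sum_le_sum fun i _ => ?_
              rw [loss01]; split_ifs <;> norm_num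
        _ = m := by simp
      calc (1/(m:ℝ)) * ∑ i, loss01 (h (S i).1) (S i).2 ≤ (1/(m:ℝ)) * m := by
            gcongr
      _ = 1 := one_div_mul_cancel (ne_of_gt hmR)
    have h1mem : (1:ℝ) ∈ {ε : ℝ | 0 ≤ ε ∧
        ∃ 𝒮 : Set (Fin m → (Fin D → ℝ) × ℝ), MeasurableSet 𝒮 ∧
          ENNReal.ofReal (1 - δ) ≤ μS D m hstar 𝒮 ∧
          ∀ S ∈ 𝒮, ∀ S' ∈ 𝒮,
            |Ld D hstar (alg D m hstar S') - Le D m S (alg D m hstar S')| ≤ ε} := by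
      refine ⟨zero_le_one, Set.univ, MeasurableSet.univ, ?_, ?_⟩
      · rw [measure_univ]; exact ENNReal.ofReal_le_one.mpr (by linarith)
      · intro S _ S' _
        rw [Ld_alg_eq_zero hD hmeas hrange S', zero_sub, abs_neg,
          abs_of_nonneg (hLe0 S _)]
        exact hLe1 S _
    have hlow : ∀ ε ∈ {ε : ℝ | 0 ≤ ε ∧
        ∃ 𝒮 : Set (Fin m → (Fin D → ℝ) × ℝ), MeasurableSet 𝒮 ∧
          ENNReal.ofReal (1 - δ) ≤ μS D m hstar 𝒮 ∧
          ∀ S ∈ 𝒮, ∀ S' ∈ 𝒮,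
            |Ld D hstar (alg D m hstar S') - Le D m S (alg D m hstar S')| ≤ ε},
        (1:ℝ) ≤ ε := by
      rintro ε ⟨hε0, 𝒮, h𝒮meas, h𝒮prob, hbound⟩
      have hnegS : MeasurePreserving
          (fun X : Fin m → Fin D → ℝ => fun i => fun k => -(X i k)) ν ν := by
        rw [hν]
        exact measurePreserving_pi _ _ fun _ : Fin m => gaussianD_neg
      set Tn : (Fin m → Fin D → ℝ) → (Fin m → Fin D → ℝ) :=
        fun X => fun i => fun k => -(X i k) with hTn
      set G : Set (Fin m → Fin D → ℝ) := Fmap m hstar ⁻¹' 𝒮 with hG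
      have hGmeas : MeasurableSet G := hF.measurable h𝒮meas
      have hGprob : ENNReal.ofReal (1 - δ) ≤ ν G := by
        rw [hG, ← Measure.map_apply hF.measurable h𝒮meas, hF.map_eq]
        exact h𝒮prob
      have hGprob2 : ENNReal.ofReal (1 - δ) ≤ ν (Tn ⁻¹' G) := by
        rw [hnegS.measure_preimage hGmeas.nullMeasurableSet]
        exact hGprob
      have hinter : ν (G ∩ Tn ⁻¹' G) ≠ 0 := by
        intro h0
        have hadd := measure_union_add_inter (μ := ν) G (hnegS.measurable hGmeas)
        rw [h0, add_zero] at hadd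
        have h1lt : (1:ℝ≥0∞) < ENNReal.ofReal (1-δ) + ENNReal.ofReal (1-δ) := by
          rw [← ENNReal.ofReal_add (by linarith) (by linarith), ← ENNReal.ofReal_one]
          exact (ENNReal.ofReal_lt_ofReal_iff (by linarith)).mpr (by linarith)
        have hcontr : (1:ℝ≥0∞) < ν (G ∪ Tn ⁻¹' G) :=
          lt_of_lt_of_le h1lt (by rw [hadd]; exact add_le_add hGprob hGprob2)
        exact absurd hcontr (not_lt.mpr prob_le_one)
      obtain ⟨X, hX⟩ := nonempty_of_measure_ne_zero hinter
      have hS : Fmap m hstar X ∈ 𝒮 := hX.1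
      have hS' : Fmap m hstar (Tn X) ∈ 𝒮 := hX.2
      have hb := hbound _ hS _ hS'
      have hLeone : Le D m (Fmap m hstar X) (alg D m hstar (Fmap m hstar (Tn X))) = 1 := by
        have hone : ∀ i : Fin m,
            loss01 (alg D m hstar (Fmap m hstar (Tn X)) ((Fmap m hstar X i).1))
              ((Fmap m hstar X i).2) = 1 := by
          intro i
          have hex : ∃ j : Fin m,
              (Fmap m hstar X i).1 = -((Fmap m hstar (Tn X) j).1) := by
            refine ⟨i, ?_⟩
            show X i = -(fun k => -(X i k))
            funext k; simp
          have h1 : alg D m hstar (Fmap m hstar (Tn X)) ((Fmap m hstar X i).1)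
              = -hstar ((Fmap m hstar X i).1) := if_pos hex
          rw [h1]
          show loss01 (-hstar (X i)) (hstar (X i)) = 1
          rw [loss01, if_neg ?_]
          rcases hrange (X i) with h | h <;> rw [h] <;> norm_num
        rw [Le, Finset.sum_congr rfl fun i _ => hone i, Finset.sum_const]
        simp only [Finset.card_univ, Fintype.card_fin, nsmul_eq_mul, mul_one]
        exact one_div_mul_cancel (ne_of_gt hmR)
      have habs : |Ld D hstar (alg D m hstar (Fmap m hstar (Tn X)))
          - Le D m (Fmap m hstar X) (alg D m hstar (Fmap m hstar (Tn X)))| = 1 := by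
        rw [Ld_alg_eq_zero hD hmeas hrange, hLeone]
        norm_num
      calc (1:ℝ) = _ := habs.symm
      _ ≤ ε := hb
    rw [unifAlg]
    exact le_antisymm (csInf_le ⟨0, fun x hx => hx.1⟩ h1mem)
      (le_csInf ⟨1, h1mem⟩ hlow)

end AbstractSetup
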